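/- Let K ⊆ ℝ^n be convex, f : ℝ^n → ℝ differentiable and 1-strongly convex, g : K → ℝ convex, α > 0, γ ∈ [0,1], y ∈ ℝ^n, and z₁, z₂ ∈ ℝ^n. Suppose z⁺ minimizes over K the function z ↦ α g(z) + α⟨y, z⟩ + γ D(z, z₁) + (1 - γ) D(z, z₂), where D is the Bregman distance of f. Then for all z ∈ K: α g(z) - α g(z⁺) + α ⟨y, z - z⁺⟩ ≥ D(z, z⁺) + γ (D(z⁺, z₁) - D(z, z₁)) + (1 - γ)(D(z⁺, z₂) - D(z, z₂)). -/

import Mathlib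

open scoped RealInnerProductSpace

theorem stmt_8 (n : ℕ) (K : Set (EuclideanSpace ℝ (Fin n))) (hK : Convex ℝ K)
    (f : EuclideanSpace ℝ (Fin n) → ℝ)
    (f' : EuclideanSpace ℝ (Fin n) → EuclideanSpace ℝ (Fin n))
    (hdiff : ∀ x, HasGradientAt f (f' x) x)
    (hsc : ∀ x y, f x ≥ f y + ⟪f' y, x - y⟫ + (1/2) * ‖x - y‖^2)
    (D : EuclideanSpace ℝ (Fin n) → EuclideanSpace ℝ (Fin n) → ℝ)
    (hD : ∀ x y, D x y = f x - f y - ⟪f' y, x - y⟫)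
    (g : EuclideanSpace ℝ (Fin n) → ℝ) (hg : ConvexOn ℝ K g)
    (α γ : ℝ) (hα : 0 < α) (hγ0 : 0 ≤ γ) (hγ1 : γ ≤ 1)
    (y z₁ z₂ : EuclideanSpace ℝ (Fin n))
    (zp : EuclideanSpace ℝ (Fin n)) (hzp : zp ∈ K)
    (hmin : ∀ z ∈ K,
      α * g zp + α * ⟪y, zp⟫ + γ * D zp z₁ + (1 - γ) * D zp z₂
        ≤ α * g z + α * ⟪y, z⟫ + γ * D z z₁ + (1 - γ) * D z z₂) :
    ∀ z ∈ K, α * g z - α * g zp + α * ⟪y, z - zp⟫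
      ≥ D z zp + γ * (D zp z₁ - D z z₁) + (1 - γ) * (D zp z₂ - D z z₂) := by
  intro z hz
  set v := z - zp with hv
  -- derivative of t ↦ f (zp + t • v) at 0
  have hline : HasDerivAt (fun t : ℝ => zp + t • v) v 0 := by
    simpa using ((hasDerivAt_id (0:ℝ)).smul_const v).const_add zp
  have hφ : HasDerivAt (fun t : ℝ => f (zp + t • v)) ⟪f' zp, v⟫ 0 := by
    have h2 := (hdiff zp).hasFDerivAt
    have h3 : HasFDerivAt f (InnerProductSpace.toDual ℝ _ (f' zp) : _ →L[ℝ] ℝ)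
        (zp + (0:ℝ) • v) := by simpa using h2
    have := h3.comp_hasDerivAt 0 hline
    exact this
  set C : ℝ := γ * ⟪f' z₁, v⟫ + (1 - γ) * ⟪f' z₂, v⟫ - α * (g z - g zp) - α * ⟪y, v⟫
    with hC
  have key : ∀ t : ℝ, t ∈ Set.Ioo (0:ℝ) 1 → C ≤ (f (zp + t • v) - f zp) / t := by
    intro t ht
    have ht0 := ht.1
    have hcomb : zp + t • v = (1 - t) • zp + t • z := by
      rw [hv]; module
    have hmem : zp + t • v ∈ K := by
      rw [hcomb]
      exact hK hzp hz (by linarith [ht.2]) ht0.le (by ring)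
    have hgt : g (zp + t • v) ≤ (1 - t) * g zp + t * g z := by
      have := hg.2 hzp hz (by linarith [ht.2] : (0:ℝ) ≤ 1 - t) ht0.le (by ring)
      rw [hcomb]
      simpa using this
    have h1 := hmin _ hmem
    simp only [hD] at h1
    have e1 : ⟪y, zp + t • v⟫ = ⟪y, zp⟫ + t * ⟪y, v⟫ := by
      rw [inner_add_right, real_inner_smul_right]
    have e2 : ∀ w u : EuclideanSpace ℝ (Fin n),
        ⟪w, (zp + t • v) - u⟫ = ⟪w, zp - u⟫ + t * ⟪w, v⟫ := by
      intro w u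
      rw [show (zp + t • v) - u = (zp - u) + t • v by abel, inner_add_right,
        real_inner_smul_right]
    rw [e1, e2 (f' z₁) z₁, e2 (f' z₂) z₂] at h1
    rw [le_div_iff₀ ht0]
    nlinarith [h1, mul_le_mul_of_nonneg_left hgt hα.le]
  have hlim : Filter.Tendsto (fun t : ℝ => (f (zp + t • v) - f zp) / t)
      (nhdsWithin 0 (Set.Ioi 0)) (nhds ⟪f' zp, v⟫) := by
    have h4 := hasDerivAt_iff_tendsto_slope.mp hφ
    have h5 := h4.mono_left (nhdsWithin_mono 0 (fun x hx => ne_of_gt hx))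
    refine h5.congr (fun t => ?_)
    simp [slope_def_field]
  have hA : C ≤ ⟪f' zp, v⟫ := by
    refine ge_of_tendsto hlim ?_
    filter_upwards [Ioo_mem_nhdsGT_of_mem (Set.left_mem_Ico.mpr one_pos)] with t ht
    exact key t ht
  -- final algebra
  simp only [hD]
  have e3 : ∀ w u : EuclideanSpace ℝ (Fin n),
      ⟪w, z - u⟫ = ⟪w, zp - u⟫ + ⟪w, v⟫ := by
    intro w u
    rw [show z - u = (zp - u) + v by rw [hv]; abel, inner_add_right]
  have e4 : ⟪f' zp, z - zp⟫ = ⟪f' zp, v⟫ := by rw [hv]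
  have e5 : ⟪y, z - zp⟫ = ⟪y, v⟫ := by rw [hv]
  rw [e3 (f' z₁) z₁, e3 (f' z₂) z₂, e4, e5]
  rw [hC] at hA
  nlinarith [hA]
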